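/- Let G be a finite group acting on a locally connected space B, b : B → A the open quotient map, K the upper ramification set, assumed negligible, I = b(K). Let V be a connected non-empty open subset of A and W a connected component of b⁻¹V. Then b(W) = V and b⁻¹V = ⋃_{g ∈ G} g·W; moreover V − I is connected and non-empty. -/
import Mathlib

open Set Topology

/-- An open subset `U` is Z-dense if it meets every non-empty open connected set
in a non-empty connected set. -/
def IsZDense {X : Type*} [TopologicalSpace X] (U : Set X) : Prop :=
  IsOpen U ∧ ∀ C : Set X, IsOpen C → IsConnected C → IsConnected (U ∩ C)

/-- A subset is negligible if its complement is Z-dense. -/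
def IsNegligible {X : Type*} [TopologicalSpace X] (I : Set X) : Prop :=
  IsZDense Iᶜ

/-- A negligible subset element `(U, I)`: `U` open, `I ⊆ U`, the subspace `U`
locally connected, and `I` negligible in the subspace `U`. -/
def NegligibleElem {Y : Type*} [TopologicalSpace Y] (U I : Set Y) : Prop :=
  IsOpen U ∧ I ⊆ U ∧ LocallyConnectedSpace ↥U ∧
    IsNegligible ((Subtype.val ⁻¹' I : Set ↥U))

/-- A continuous function is diffuse if it pulls back negligible subset elements
to negligible subset elements. -/
def Diffuse {X Y : Type*} [TopologicalSpace X] [TopologicalSpace Y] (f : X → Y) : Prop :=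
  Continuous f ∧ ∀ U I : Set Y, NegligibleElem U I → NegligibleElem (f ⁻¹' U) (f ⁻¹' I)

open Pointwise

/-- The upper ramification set of a group action: points having no neighborhood
`V` with `g • V ∩ V = ∅` for all non-identity `g`. -/
def upperRamification (G : Type*) {B : Type*} [Group G] [TopologicalSpace B]
    [MulAction G B] : Set B :=
  {x : B | ¬ ∃ V : Set B, IsOpen V ∧ x ∈ V ∧ ∀ g : G, g ≠ 1 → Disjoint (g • V) V}

lemma upperRamification_smul_mem {G B : Type*} [Group G] [TopologicalSpace B] [MulAction G B]
    (hcont : ∀ g : G, Continuous fun x : B => g • x)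
    {k : B} (hk : k ∈ upperRamification G (B := B)) (g : G) :
    g • k ∈ upperRamification G (B := B) := by
  intro ⟨U, hUo, hkU, hdis⟩
  refine hk ⟨g⁻¹ • U, ?_, ?_, ?_⟩
  · have : g⁻¹ • U = (fun x : B => g • x) ⁻¹' U := by
      ext y; simp [Set.mem_smul_set_iff_inv_smul_mem]
    rw [this]; exact hUo.preimage (hcont g)
  · exact Set.mem_smul_set_iff_inv_smul_mem.mpr (by simpa using hkU)
  · intro h hh
    have h1 : g * h * g⁻¹ ≠ 1 := by
      intro e; apply hh
      have := congrArg (fun z => g⁻¹ * z * g) e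
      simpa [mul_assoc] using this
    have hd := Set.disjoint_smul_set (a := g⁻¹) |>.mpr (hdis (g * h * g⁻¹) h1)
    have e2 : g⁻¹ • ((g * h * g⁻¹) • U) = h • (g⁻¹ • U) := by
      rw [smul_smul, smul_smul]; congr 1; group
    rwa [e2] at hd

/-- For `V` a connected non-empty open subset of `A` and `W` a connected
component of `b⁻¹V`: `b(W) = V`, `b⁻¹V = ⋃_{g ∈ G} g • W`, and `V − b(K)` is
connected and non-empty. -/
theorem quotient_component_saturation
    {G B A : Type*} [Group G] [Finite G] [TopologicalSpace B]
    [LocallyConnectedSpace B] [TopologicalSpace A] [MulAction G B]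
    (hcont : ∀ g : G, Continuous fun x : B => g • x)
    (b : B → A) (hb : Continuous b) (hopen : IsOpenMap b)
    (hsurj : Function.Surjective b)
    (hfib : ∀ x y : B, b x = b y ↔ ∃ g : G, g • x = y)
    (hK : IsNegligible (upperRamification G (B := B)))
    (V : Set A) (hV : IsOpen V) (hVconn : IsConnected V)
    (W : Set B) (x : B) (hx : x ∈ b ⁻¹' V)
    (hW : W = connectedComponentIn (b ⁻¹' V) x) :
    b '' W = V ∧ (b ⁻¹' V = ⋃ g : G, g • W) ∧
      IsConnected (V \ (b '' upperRamification G (B := B))) := by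
  classical
  set K := upperRamification G (B := B) with hKdef
  have hPo : IsOpen (b ⁻¹' V) := hV.preimage hb
  have hxW : x ∈ W := hW ▸ mem_connectedComponentIn hx
  have hWconn : IsConnected W := hW ▸ isConnected_connectedComponentIn_iff.mpr hx
  have hWopen : IsOpen W := hW ▸ hPo.connectedComponentIn
  -- homeomorphism given by g
  let e : G → B ≃ₜ B := fun g =>
    { toFun := fun y => g • y
      invFun := fun y => g⁻¹ • y
      left_inv := fun y => inv_smul_smul g y
      right_inv := fun y => smul_inv_smul g y
      continuous_toFun := hcont g
      continuous_invFun := hcont g⁻¹ }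
  have hbsmul : ∀ (g : G) (y : B), b (g • y) = b y := fun g y =>
    ((hfib y (g • y)).mpr ⟨g, rfl⟩).symm
  have hsmul_img : ∀ (g : G) (s : Set B), g • s = (e g) '' s := fun g s => rfl
  have himg : ∀ g : G, (e g) '' (b ⁻¹' V) = b ⁻¹' V := by
    intro g
    ext y
    constructor
    · rintro ⟨z, hz, rfl⟩
      show b (g • z) ∈ V
      rw [hbsmul]; exact hz
    · intro hy
      exact ⟨g⁻¹ • y, by simpa [Set.mem_preimage, hbsmul g⁻¹ y] using hy,
        smul_inv_smul g y⟩
  have hgW : ∀ g : G, g • W = connectedComponentIn (b ⁻¹' V) (g • x) := by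
    intro g
    rw [hsmul_img, hW, Homeomorph.image_connectedComponentIn (e g) hx, himg g]
    rfl
  set S : Set B := ⋃ g : G, g • W with hSdef
  have hSsub : S ⊆ b ⁻¹' V := by
    refine Set.iUnion_subset fun g => ?_
    rw [hgW g]; exact connectedComponentIn_subset _ _
  have hSopen : IsOpen S :=
    isOpen_iUnion fun g => (hsmul_img g W) ▸ (e g).isOpenMap W hWopen
  have hSsat : ∀ z ∈ S, ∀ g : G, g • z ∈ S := by
    rintro z hz g
    obtain ⟨t, ⟨h, rfl⟩, hzt⟩ := hz
    obtain ⟨w, hw, rfl⟩ := hzt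
    exact Set.mem_iUnion.mpr ⟨g * h, ⟨w, hw, (smul_smul g h w).symm⟩⟩
  have hCopen : IsOpen (b ⁻¹' V \ S) := by
    rw [isOpen_iff_forall_mem_open]
    intro y hy
    refine ⟨connectedComponentIn (b ⁻¹' V) y, ?_, hPo.connectedComponentIn,
      mem_connectedComponentIn hy.1⟩
    intro z hz
    refine ⟨connectedComponentIn_subset _ _ hz, ?_⟩
    intro hzS
    obtain ⟨t, ⟨g, rfl⟩, hzt⟩ := hzS
    have hzt : z ∈ connectedComponentIn (b ⁻¹' V) (g • x) := (hgW g) ▸ (hzt : z ∈ g • W)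
    have h1 : connectedComponentIn (b ⁻¹' V) y = connectedComponentIn (b ⁻¹' V) z :=
      connectedComponentIn_eq hz
    have h2 : connectedComponentIn (b ⁻¹' V) (g • x) = connectedComponentIn (b ⁻¹' V) z :=
      connectedComponentIn_eq hzt
    have : y ∈ connectedComponentIn (b ⁻¹' V) (g • x) := by
      rw [h2, ← h1]; exact mem_connectedComponentIn hy.1
    exact hy.2 (Set.mem_iUnion.mpr ⟨g, (hgW g) ▸ this⟩)
  -- images partition V
  have hdisj : Disjoint (b '' S) (b '' (b ⁻¹' V \ S)) := by
    rw [Set.disjoint_left]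
    rintro a ⟨s, hs, rfl⟩ ⟨t, ht, hbt⟩
    obtain ⟨g, rfl⟩ := (hfib s t).mp hbt.symm
    exact ht.2 (hSsat s hs g)
  have hScomp : b ⁻¹' V = S := by
    by_contra hne
    have hne' : (b ⁻¹' V \ S).Nonempty := by
      rcases Set.eq_empty_or_nonempty (b ⁻¹' V \ S) with h | h
      · exact absurd (Set.Subset.antisymm (Set.diff_eq_empty.mp h) hSsub) hne
      · exact h
    have hsub : V ⊆ b '' S ∪ b '' (b ⁻¹' V \ S) := by
      intro a ha
      obtain ⟨y, rfl⟩ := hsurj a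
      by_cases hyS : y ∈ S
      · exact Or.inl ⟨y, hyS, rfl⟩
      · exact Or.inr ⟨y, ⟨ha, hyS⟩, rfl⟩
    have h1 : (V ∩ b '' S).Nonempty := ⟨b x, hx, ⟨x, Set.mem_iUnion.mpr
      ⟨1, by simpa using hxW⟩, rfl⟩⟩
    have h2 : (V ∩ b '' (b ⁻¹' V \ S)).Nonempty := by
      obtain ⟨y, hy⟩ := hne'
      exact ⟨b y, hy.1, ⟨y, hy, rfl⟩⟩
    obtain ⟨a, -, haS, haC⟩ := hVconn.isPreconnected (b '' S) (b '' (b ⁻¹' V \ S))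
      (hopen _ hSopen) (hopen _ hCopen) hsub h1 h2
    exact Set.disjoint_left.mp hdisj haS haC
  have hbW : b '' W = V := by
    apply Set.Subset.antisymm
    · rintro a ⟨w, hw, rfl⟩
      have hWsub : W ⊆ b ⁻¹' V := hW ▸ connectedComponentIn_subset (b ⁻¹' V) x
      exact hWsub hw
    · intro a ha
      obtain ⟨y, rfl⟩ := hsurj a
      have : y ∈ S := hScomp ▸ ha
      obtain ⟨t, ⟨g, rfl⟩, hyt⟩ := this
      obtain ⟨w, hw, rfl⟩ := hyt
      exact ⟨w, hw, (hbsmul g w).symm⟩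
  refine ⟨hbW, hScomp, ?_⟩
  -- part 3
  have hKinv : ∀ (g : G) (k : B), k ∈ K → g • k ∈ K := fun g k hk =>
    upperRamification_smul_mem hcont hk g
  have hWKconn : IsConnected (Kᶜ ∩ W) := hK.2 W hWopen hWconn
  have himgeq : b '' (Kᶜ ∩ W) = V \ b '' K := by
    apply Set.Subset.antisymm
    · rintro a ⟨w, ⟨hwK, hwW⟩, rfl⟩
      refine ⟨hbW ▸ (⟨w, hwW, rfl⟩ : b w ∈ b '' W), ?_⟩
      rintro ⟨k, hk, hbk⟩
      obtain ⟨g, rfl⟩ := (hfib k w).mp hbk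
      exact hwK (hKinv g k hk)
    · rintro a ⟨haV, haK⟩
      obtain ⟨w, hwW, rfl⟩ := (hbW.symm ▸ haV : a ∈ b '' W)
      exact ⟨w, ⟨fun hwK => haK ⟨w, hwK, rfl⟩, hwW⟩, rfl⟩
  rw [← himgeq]
  exact hWKconn.image b hb.continuousOn
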